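/- Let r : ℝ → ℂ be continuous with 1 + s|r(s)|² > 0 for all s ≤ μ and s ↦ log(1 + s|r(s)|²) integrable on (−∞, μ]. Define δ(λ) = exp[ (−i/(2π)) ∫_{−∞}^{μ} log(1 + s|r(s)|²)/(s − λ) ds ] for λ ∈ ℂ \ (−∞, μ]. Then δ is analytic and nonvanishing on ℂ \ (−∞, μ], and δ satisfies the symmetry δ(λ) = conj(δ(conj λ))⁻¹. -/

import Mathlib

open Complex MeasureTheory

/-- The function
`δ(λ) = exp[(−i/(2π)) ∫_{−∞}^{μ} log(1 + s|r(s)|²)/(s − λ) ds]`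
is analytic and nonvanishing on `ℂ \ (−∞, μ]`, and satisfies the symmetry
`δ(λ) = conj(δ(conj λ))⁻¹`. -/
theorem delta_analytic_nonvanishing_symmetry (μ : ℝ) (r : ℝ → ℂ)
    (hr : Continuous r)
    (hpos : ∀ s : ℝ, s ≤ μ → 0 < 1 + s * ‖r s‖^2)
    (hint : IntegrableOn (fun s : ℝ => Real.log (1 + s * ‖r s‖^2))
      (Set.Iic μ))
    (cut : Set ℂ) (hcutdef : cut = {z : ℂ | z.im = 0 ∧ z.re ≤ μ})
    (δ : ℂ → ℂ)
    (hδ : ∀ lam : ℂ, δ lam = Complex.exp ((-Complex.I / (2 * Real.pi)) *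
      ∫ s in Set.Iic μ,
        ((Real.log (1 + s * ‖r s‖^2) : ℂ) / ((s : ℂ) - lam)))) :
    DifferentiableOn ℂ δ cutᶜ ∧
    (∀ lam : ℂ, lam ∉ cut → δ lam ≠ 0) ∧
    (∀ lam : ℂ, lam ∉ cut →
      δ lam = ((starRingEnd ℂ) (δ ((starRingEnd ℂ) lam)))⁻¹) := by
  set f : ℝ → ℝ := fun s => Real.log (1 + s * ‖r s‖^2) with hf
  have hfmeas : Measurable f :=
    Real.measurable_log.comp ((continuous_const.add (continuous_id.mul
      ((continuous_norm.comp hr).pow 2))).measurable)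
  have hclosed : IsClosed cut := by
    rw [hcutdef]
    exact (isClosed_eq Complex.continuous_im continuous_const).inter
      (isClosed_le Complex.continuous_re continuous_const)
  have hmem : ∀ s : ℝ, s ≤ μ → ((s : ℂ) ∈ cut) := by
    intro s hs; rw [hcutdef]; simp [hs]
  have key : ∀ lam : ℂ, lam ∉ cut → DifferentiableAt ℂ
      (fun x : ℂ => ∫ s in Set.Iic μ, ((f s : ℂ) / ((s : ℂ) - x))) lam := by
    intro lam hlam
    set d : ℝ := Metric.infDist lam cut with hd
    have hcutne : cut.Nonempty := ⟨(μ : ℂ), hmem μ le_rfl⟩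
    have hdpos : 0 < d := by
      exact (hclosed.notMem_iff_infDist_pos hcutne).1 hlam
    have hlb : ∀ s : ℝ, s ≤ μ → ∀ x ∈ Metric.ball lam (d/2),
        d/2 ≤ ‖(s : ℂ) - x‖ := by
      intro s hs x hx
      have h1 : d ≤ dist lam (s : ℂ) := Metric.infDist_le_dist_of_mem (hmem s hs)
      have h2 : dist lam x < d/2 := by simpa [dist_comm] using hx
      have h3 : dist lam (s : ℂ) ≤ dist lam x + dist x (s : ℂ) := dist_triangle _ _ _
      have h4 : dist x (s : ℂ) = ‖(s : ℂ) - x‖ := by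
        rw [dist_eq_norm, norm_sub_rev]
      linarith
    have hne : ∀ s : ℝ, s ≤ μ → ∀ x ∈ Metric.ball lam (d/2), ((s : ℂ) - x) ≠ 0 := by
      intro s hs x hx h
      have := hlb s hs x hx
      rw [h] at this; simp at this; linarith
    have main := hasDerivAt_integral_of_dominated_loc_of_deriv_le
      (F := fun (x : ℂ) (s : ℝ) => (f s : ℂ) / ((s : ℂ) - x))
      (F' := fun (x : ℂ) (s : ℝ) => (f s : ℂ) / ((s : ℂ) - x)^2)
      (x₀ := lam) (μ := volume.restrict (Set.Iic μ))
      (bound := fun s => |f s| / (d/2)^2)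
      (Metric.ball_mem_nhds lam (half_pos hdpos))
      (Filter.Eventually.of_forall fun x =>
        ((Complex.measurable_ofReal.comp hfmeas).div
          ((Complex.measurable_ofReal.comp measurable_id).sub
            measurable_const)).aestronglyMeasurable)
      ?_ ?_ ?_ ?_ ?_
    · exact main.2.differentiableAt
    · -- Integrable (F lam)
      refine Integrable.mono' (hint.norm.const_mul (d/2)⁻¹) ?_ ?_
      · exact ((Complex.measurable_ofReal.comp hfmeas).div
          ((Complex.measurable_ofReal.comp measurable_id).sub
            measurable_const)).aestronglyMeasurable
      · filter_upwards [ae_restrict_mem measurableSet_Iic] with s hs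
        have hb := hlb s hs lam (Metric.mem_ball_self (half_pos hdpos))
        rw [norm_div]
        rw [div_le_iff₀ (lt_of_lt_of_le (half_pos hdpos) (by simpa using hb))]
        calc ‖((f s : ℂ))‖ = (d/2)⁻¹ * ‖f s‖ * (d/2) := by
              field_simp
              simp [Complex.norm_real]
          _ ≤ (d/2)⁻¹ * ‖f s‖ * ‖(s : ℂ) - lam‖ := by
              have hnn : (0:ℝ) ≤ (d/2)⁻¹ * ‖f s‖ := by positivity
              exact mul_le_mul_of_nonneg_left (by simpa using hb) hnn
    · -- AEStronglyMeasurable F' lam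
      exact ((Complex.measurable_ofReal.comp hfmeas).div
        (((Complex.measurable_ofReal.comp measurable_id).sub measurable_const).pow
          measurable_const)).aestronglyMeasurable
    · -- bound
      filter_upwards [ae_restrict_mem measurableSet_Iic] with s hs x hx
      have hb := hlb s hs x hx
      rw [norm_div]
      have h2 : (d/2)^2 ≤ ‖((s : ℂ) - x)^2‖ := by
        rw [norm_pow]
        exact pow_le_pow_left₀ (le_of_lt (half_pos hdpos)) (by simpa using hb) 2
      have hpos2 : (0:ℝ) < (d/2)^2 := by positivity
      rw [div_le_div_iff₀ (lt_of_lt_of_le hpos2 h2) hpos2]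
      have hfs : ‖((f s : ℂ))‖ = |f s| := by simp [Complex.norm_real]
      rw [hfs]
      exact mul_le_mul_of_nonneg_left h2 (abs_nonneg _)
    · -- bound integrable
      exact hint.abs.div_const _
    · -- HasDerivAt
      filter_upwards [ae_restrict_mem measurableSet_Iic] with s hs x hx
      have h1 : HasDerivAt (fun x : ℂ => (s : ℂ) - x) (-1) x := by
        simpa using (hasDerivAt_id x).const_sub (s : ℂ)
      have h2 : HasDerivAt (fun x : ℂ => ((s : ℂ) - x)⁻¹) (((s : ℂ) - x)^2)⁻¹ x := by
        have := h1.inv (hne s hs x hx)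
        simpa [Pi.inv_def] using this
      have h3 := h2.const_mul ((f s : ℂ))
      simpa [div_eq_mul_inv] using h3
  refine ⟨?_, ?_, ?_⟩
  · intro lam hlam
    have hdiff : DifferentiableAt ℂ (fun lam : ℂ =>
        Complex.exp ((-Complex.I / (2 * Real.pi)) *
          ∫ s in Set.Iic μ, ((f s : ℂ) / ((s : ℂ) - lam)))) lam :=
      ((key lam hlam).const_mul _).cexp
    exact ((hdiff.congr_of_eventuallyEq
      (Filter.Eventually.of_forall fun x => (hδ x))).differentiableWithinAt)
  · intro lam _
    rw [hδ lam]; exact Complex.exp_ne_zero _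
  · intro lam _
    rw [hδ lam, hδ ((starRingEnd ℂ) lam)]
    rw [← Complex.exp_conj, ← Complex.exp_neg]
    congr 1
    rw [map_mul, ← integral_conj]
    have h1 : (starRingEnd ℂ) (-Complex.I / (2 * Real.pi)) = Complex.I / (2 * Real.pi) := by
      rw [map_div₀, map_neg, Complex.conj_I, map_mul, Complex.conj_ofReal, map_ofNat]
      ring
    have h2 : (fun s : ℝ => (starRingEnd ℂ) ((f s : ℂ) / ((s : ℂ) - (starRingEnd ℂ) lam)))
        = fun s : ℝ => (f s : ℂ) / ((s : ℂ) - lam) := by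
      funext s
      rw [map_div₀, Complex.conj_ofReal, map_sub, Complex.conj_ofReal, Complex.conj_conj]
    rw [h1, h2]
    ring
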